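/- In the ring of formal power series in one variable y with coefficients in the polynomial ring ℚ[t], the following identity holds: (t − E_2(y)) · Σ_{n≥0} (p_n(t)/n!) y^n = (t − 1) · E_1(y), where E_c(y) = Σ_{k≥0} (c(t−1))^k y^k / k!. Equivalently, Σ_{n≥0} (p_n(t)/n!) y^n = e^{y(t−1)} (t−1)/(t − e^{2y(t−1)}). -/

import Mathlib

/-- The set `𝓑` of nonempty subsets `B` of `{-n, …, -1, 1, …, n}` such that for no
`i ∈ {1, …, n}` both `i` and `-i` belong to `B`. -/
def calB (n : ℕ) : Set (Finset ℤ) :=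
  {B | B.Nonempty ∧ (∀ z ∈ B, z ≠ 0 ∧ |z| ≤ (n : ℤ)) ∧
    ∀ i : ℤ, 1 ≤ i → i ≤ (n : ℤ) → ¬(i ∈ B ∧ -i ∈ B)}

/-- `d_m(n)`: the number of chains `B^{(m)} ⊊ ⋯ ⊊ B^{(1)}` of `m` elements of `𝓑`
(the number of `m`-dimensional cones of the fan `Σ(B_n)`); `d_0(n) = 1`. -/
noncomputable def dB (n m : ℕ) : ℕ :=
  Set.ncard {c : Fin m → Finset ℤ |
    (∀ k l : Fin m, k < l → c l ⊂ c k) ∧ ∀ k, c k ∈ calB n}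

/-- The Poincaré polynomial `p_n(t) = Σ_{m=0}^{n} d_m(n)·(t-1)^{n-m} ∈ ℚ[t]`
of the toric variety `X(B_n)` (with `p_0(t) = 1`). -/
noncomputable def pPoly (n : ℕ) : Polynomial ℚ :=
  ∑ m ∈ Finset.range (n + 1), (dB n m : Polynomial ℚ) * (Polynomial.X - 1) ^ (n - m)

/-- `E_c(y) = Σ_{k ≥ 0} (c(t-1))^k y^k / k!`, a power series in `y` over `ℚ[t]`. -/
noncomputable def Ey (c : ℚ) : PowerSeries (Polynomial ℚ) :=
  PowerSeries.mk fun k => (k.factorial : ℚ)⁻¹ • (Polynomial.C c * (Polynomial.X - 1)) ^ k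

open Finset

/-- signed ground set -/
def sgnSet (A : Finset ℤ) : Finset ℤ := A ∪ A.image (fun z => -z)

def okB (A : Finset ℤ) (B : Finset ℤ) : Prop :=
  B.Nonempty ∧ (∀ z ∈ B, |z| ∈ A) ∧ ∀ z ∈ B, -z ∉ B

instance : DecidablePred (okB A) := fun _ => by unfold okB; infer_instance

lemma okB_subset_sgnSet {A B : Finset ℤ} (h : okB A B) : B ⊆ sgnSet A := by
  intro z hz
  rcases h.2.1 z hz with hza
  rcases abs_choice z with h1 | h1
  · exact mem_union_left _ (h1 ▸ hza)
  · exact mem_union_right _ (mem_image.2 ⟨|z|, hza, by omega⟩)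

def BFin (A : Finset ℤ) : Finset (Finset ℤ) := (sgnSet A).powerset.filter (okB A)

lemma mem_BFin {A E : Finset ℤ} : E ∈ BFin A ↔ okB A E := by
  simp only [BFin, mem_filter, mem_powerset, and_iff_right_iff_imp]
  exact okB_subset_sgnSet

def chainFin (A : Finset ℤ) (m : ℕ) : Finset (Fin m → Finset ℤ) :=
  (Fintype.piFinset fun _ => BFin A).filter
    (fun c => ∀ k l : Fin m, k < l → c l ⊂ c k)

lemma mem_chainFin {A : Finset ℤ} {m : ℕ} {c : Fin m → Finset ℤ} :
    c ∈ chainFin A m ↔ (∀ k l : Fin m, k < l → c l ⊂ c k) ∧ ∀ k, okB A (c k) := by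
  simp only [chainFin, mem_filter, Fintype.mem_piFinset, mem_BFin]
  tauto

def Nrec : ℕ → ℕ → ℕ
  | 0 => fun _ => 1
  | (m+1) => fun n => ∑ k ∈ Finset.Icc 1 n, n.choose k * 2 ^ k * Nrec m (n - k)

def asupp (E : Finset ℤ) : Finset ℤ := E.image (fun z => |z|)

lemma card_chainFin_succ (A : Finset ℤ) (m : ℕ) :
    (chainFin A (m+1)).card = ∑ E ∈ BFin A, (chainFin (A \ asupp E) m).card := by
  classical
  rw [← Finset.card_sigma]
  refine Finset.card_bij'
    (fun c _ => (⟨c 0 \ Finset.univ.sup (Fin.tail c), Fin.tail c⟩ :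
      Σ _ : Finset ℤ, (Fin m → Finset ℤ)))
    (fun p _ => Fin.cons (p.1 ∪ Finset.univ.sup p.2) p.2) ?_ ?_ ?_ ?_
  · -- forward membership
    intro c hc
    obtain ⟨hch, hok⟩ := mem_chainFin.1 hc
    set S := Finset.univ.sup (Fin.tail c) with hS
    have hmemS : ∀ z, z ∈ S ↔ ∃ k : Fin m, z ∈ c k.succ := by
      intro z; rw [hS, Finset.mem_sup]
      simp [Fin.tail]
    have hsub : ∀ k : Fin m, c k.succ ⊂ c 0 := fun k => hch 0 k.succ k.succ_pos
    have hSsub : S ⊆ c 0 := by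
      intro z hz; obtain ⟨k, hk⟩ := (hmemS z).1 hz; exact (hsub k).1 hk
    have key : ∀ z ∈ S, ∀ e ∈ c 0 \ S, |e| ≠ |z| := by
      intro z hz e he habs
      have hz0 : z ∈ c 0 := hSsub hz
      have he0 : e ∈ c 0 := (Finset.mem_sdiff.1 he).1
      rcases abs_eq_abs.1 habs with rfl | rfl
      · exact (Finset.mem_sdiff.1 he).2 hz
      · exact (hok 0).2.2 z hz0 he0
    have hEne : (c 0 \ S).Nonempty := by
      rcases m with _ | m'
      · rw [hS]
        rw [Finset.univ_eq_empty, Finset.sup_empty]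
        simpa using (hok 0).1
      · have h1 : S ⊆ c (0 : Fin (m'+1)).succ := by
          intro z hz; obtain ⟨k, hk⟩ := (hmemS z).1 hz
          rcases eq_or_lt_of_le (Fin.zero_le k) with h | h
          · rwa [h]
          · exact ((hch _ _ (Fin.succ_lt_succ_iff.2 h)).1 hk)
        obtain ⟨x, hx0, hxn⟩ := Finset.exists_of_ssubset (hsub 0)
        exact ⟨x, Finset.mem_sdiff.2 ⟨hx0, fun hxS => hxn (h1 hxS)⟩⟩
    rw [Finset.mem_sigma]
    constructor
    · rw [mem_BFin]
      refine ⟨hEne, ?_, ?_⟩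
      · intro z hz; exact (hok 0).2.1 z (Finset.mem_sdiff.1 hz).1
      · intro z hz hnz
        exact (hok 0).2.2 z (Finset.mem_sdiff.1 hz).1 (Finset.mem_sdiff.1 hnz).1
    · rw [mem_chainFin]
      constructor
      · intro k l hkl
        exact hch k.succ l.succ (Fin.succ_lt_succ_iff.2 hkl)
      · intro k
        refine ⟨(hok k.succ).1, ?_, fun z hz => (hok k.succ).2.2 z hz⟩
        intro z hz
        rw [Finset.mem_sdiff]
        refine ⟨(hok k.succ).2.1 z hz, ?_⟩
        intro hmem
        obtain ⟨e, he, habs⟩ := Finset.mem_image.1 hmem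
        exact key z ((hmemS z).2 ⟨k, hz⟩) e he habs
  · -- backward membership
    rintro ⟨E, c'⟩ hp
    rw [Finset.mem_sigma] at hp
    obtain ⟨hE, hc'⟩ := hp
    rw [mem_BFin] at hE
    obtain ⟨hch, hok⟩ := mem_chainFin.1 hc'
    set S' := Finset.univ.sup c' with hS'
    have hmemS' : ∀ z, z ∈ S' ↔ ∃ k : Fin m, z ∈ c' k := by
      intro z; rw [hS', Finset.mem_sup]; simp
    have hEnot : ∀ e ∈ E, ∀ k : Fin m, e ∉ c' k := by
      intro e he k hcon
      have h1 : |e| ∈ A \ asupp E := (hok k).2.1 e hcon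
      exact (Finset.mem_sdiff.1 h1).2 (Finset.mem_image.2 ⟨e, he, rfl⟩)
    have hnopair : ∀ z, z ∈ S' → -z ∈ S' → False := by
      intro z hz hnz
      obtain ⟨k, hk⟩ := (hmemS' z).1 hz
      obtain ⟨j, hj⟩ := (hmemS' (-z)).1 hnz
      rcases le_total k j with h | h
      · have : c' j ⊆ c' k := by
          rcases eq_or_lt_of_le h with rfl | h'
          · exact subset_rfl
          · exact (hch k j h').1
        exact (hok k).2.2 z hk (this hj)
      · have : c' k ⊆ c' j := by
          rcases eq_or_lt_of_le h with rfl | h'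
          · exact subset_rfl
          · exact (hch j k h').1
        exact (hok j).2.2 (-z) hj (by simpa using this hk)
    rw [mem_chainFin]
    constructor
    · intro k l hkl
      rcases Fin.eq_zero_or_eq_succ l with rfl | ⟨j, rfl⟩
      · exact absurd hkl (Fin.not_lt_zero k)
      rcases Fin.eq_zero_or_eq_succ k with rfl | ⟨i, rfl⟩
      · simp only [Fin.cons_succ, Fin.cons_zero]
        rw [Finset.ssubset_iff_of_subset
          (Finset.Subset.trans (Finset.le_sup (Finset.mem_univ j)) Finset.subset_union_right)]
        obtain ⟨e, he⟩ := hE.1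
        exact ⟨e, Finset.mem_union_left _ he, hEnot e he j⟩
      · simp only [Fin.cons_succ]
        exact hch i j (Fin.succ_lt_succ_iff.1 hkl)
    · intro k
      rcases Fin.eq_zero_or_eq_succ k with rfl | ⟨j, rfl⟩
      · simp only [Fin.cons_zero]
        refine ⟨?_, ?_, ?_⟩
        · obtain ⟨e, he⟩ := hE.1; exact ⟨e, Finset.mem_union_left _ he⟩
        · intro z hz
          rcases Finset.mem_union.1 hz with h | h
          · exact hE.2.1 z h
          · obtain ⟨k, hk⟩ := (hmemS' z).1 h
            exact (Finset.mem_sdiff.1 ((hok k).2.1 z hk)).1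
        · intro z hz hnz
          rcases Finset.mem_union.1 hz with h1 | h1 <;>
            rcases Finset.mem_union.1 hnz with h2 | h2
          · exact hE.2.2 z h1 h2
          · obtain ⟨k, hk⟩ := (hmemS' (-z)).1 h2
            have : |(-z)| ∈ A \ asupp E := (hok k).2.1 _ hk
            exact (Finset.mem_sdiff.1 this).2
              (Finset.mem_image.2 ⟨z, h1, by rw [abs_neg]⟩)
          · obtain ⟨k, hk⟩ := (hmemS' z).1 h1
            have : |z| ∈ A \ asupp E := (hok k).2.1 _ hk
            exact (Finset.mem_sdiff.1 this).2
              (Finset.mem_image.2 ⟨-z, h2, by rw [abs_neg]⟩)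
          · exact hnopair z h1 h2
      · simp only [Fin.cons_succ]
        refine ⟨(hok j).1, ?_, (hok j).2.2⟩
        intro z hz
        exact (Finset.mem_sdiff.1 ((hok j).2.1 z hz)).1
  · -- left inverse
    intro c hc
    obtain ⟨hch, hok⟩ := mem_chainFin.1 hc
    have hSsub : Finset.univ.sup (Fin.tail c) ⊆ c 0 := by
      intro z hz
      rw [Finset.mem_sup] at hz
      obtain ⟨k, _, hk⟩ := hz
      exact (hch 0 k.succ k.succ_pos).1 hk
    simp only [Fin.tail_cons]
    rw [Finset.sdiff_union_of_subset hSsub, Fin.cons_self_tail]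
  · -- right inverse
    rintro ⟨E, c'⟩ hp
    rw [Finset.mem_sigma] at hp
    obtain ⟨hE, hc'⟩ := hp
    rw [mem_BFin] at hE
    obtain ⟨hch, hok⟩ := mem_chainFin.1 hc'
    have hdisj : Disjoint E (Finset.univ.sup c') := by
      rw [Finset.disjoint_left]
      intro e he hcon
      rw [Finset.mem_sup] at hcon
      obtain ⟨k, _, hk⟩ := hcon
      have h1 : |e| ∈ A \ asupp E := (hok k).2.1 e hk
      exact (Finset.mem_sdiff.1 h1).2 (Finset.mem_image.2 ⟨e, he, rfl⟩)
    simp only [Fin.tail_cons, Fin.cons_zero]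
    rw [Finset.union_sdiff_cancel_right hdisj]

lemma sum_BFin (A : Finset ℤ) (hA : ∀ a ∈ A, 0 < a) (f : ℕ → ℕ) :
    ∑ E ∈ BFin A, f ((A \ asupp E).card)
      = ∑ k ∈ Finset.Icc 1 A.card, A.card.choose k * (2 ^ k * f (A.card - k)) := by
  classical
  have key : ∑ E ∈ BFin A, f ((A \ asupp E).card)
      = ∑ p ∈ (A.powerset.filter Finset.Nonempty).sigma (fun S => S.powerset),
          f ((A \ p.1).card) := by
    refine Finset.sum_nbij'
      (fun E => (⟨asupp E, E.filter (fun z => 0 < z)⟩ : Σ _ : Finset ℤ, Finset ℤ))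
      (fun p => p.2 ∪ (p.1 \ p.2).image (fun z => -z)) ?_ ?_ ?_ ?_ ?_
    · -- forward membership
      intro E hE
      rw [mem_BFin] at hE
      rw [Finset.mem_sigma]
      constructor
      · rw [Finset.mem_filter, Finset.mem_powerset]
        refine ⟨?_, hE.1.image _⟩
        intro w hw
        obtain ⟨z, hz, rfl⟩ := Finset.mem_image.1 hw
        exact hE.2.1 z hz
      · rw [Finset.mem_powerset]
        intro z hz
        rw [Finset.mem_filter] at hz
        exact Finset.mem_image.2 ⟨z, hz.1, abs_of_pos hz.2⟩
    · -- backward membership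
      rintro ⟨S, T⟩ hp
      rw [Finset.mem_sigma, Finset.mem_filter, Finset.mem_powerset,
        Finset.mem_powerset] at hp
      obtain ⟨⟨hSA, hSne⟩, hTS⟩ := hp
      have hTpos : ∀ z ∈ T, 0 < z := fun z hz => hA z (hSA (hTS hz))
      have hSpos : ∀ z ∈ S, 0 < z := fun z hz => hA z (hSA hz)
      rw [mem_BFin]
      refine ⟨?_, ?_, ?_⟩
      · obtain ⟨s, hs⟩ := hSne
        by_cases hsT : s ∈ T
        · exact ⟨s, Finset.mem_union_left _ hsT⟩
        · exact ⟨-s, Finset.mem_union_right _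
            (Finset.mem_image.2 ⟨s, Finset.mem_sdiff.2 ⟨hs, hsT⟩, rfl⟩)⟩
      · intro z hz
        rcases Finset.mem_union.1 hz with h | h
        · rw [abs_of_pos (hTpos z h)]; exact hSA (hTS h)
        · obtain ⟨w, hw, rfl⟩ := Finset.mem_image.1 h
          have hw' := Finset.mem_sdiff.1 hw
          rw [abs_neg, abs_of_pos (hSpos w hw'.1)]
          exact hSA hw'.1
      · intro z hz hnz
        rcases Finset.mem_union.1 hz with h | h <;>
          rcases Finset.mem_union.1 hnz with h' | h'
        · have := hTpos z h; have := hTpos (-z) h'; omega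
        · obtain ⟨w, hw, hwz⟩ := Finset.mem_image.1 h'
          have : w = z := by omega
          subst this
          exact (Finset.mem_sdiff.1 hw).2 h
        · obtain ⟨w, hw, hwz⟩ := Finset.mem_image.1 h
          have hwT := (Finset.mem_sdiff.1 hw).2
          have : w = -z := by omega
          subst this
          exact hwT h'
        · obtain ⟨w, hw, hwz⟩ := Finset.mem_image.1 h
          obtain ⟨w', hw', hwz'⟩ := Finset.mem_image.1 h'
          have h1 := hSpos w (Finset.mem_sdiff.1 hw).1
          have h2 := hSpos w' (Finset.mem_sdiff.1 hw').1
          omega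
    · -- left inverse
      intro E hE
      rw [mem_BFin] at hE
      have hpos : ∀ z ∈ E, z ≠ 0 := by
        intro z hz h0
        have h1 := hA _ (hE.2.1 z hz)
        rw [h0, abs_zero] at h1
        exact lt_irrefl 0 h1
      ext z
      simp only [Finset.mem_union, Finset.mem_image, Finset.mem_sdiff, Finset.mem_filter]
      constructor
      · rintro (⟨hz, _⟩ | ⟨w, ⟨hw, hwT⟩, rfl⟩)
        · exact hz
        · obtain ⟨e, he, rfl⟩ := Finset.mem_image.1 hw
          rcases lt_trichotomy e 0 with h | h | h
          · rwa [abs_of_neg h, neg_neg]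
          · exact absurd h (hpos e he)
          · exact absurd ⟨(abs_of_pos h).symm ▸ he, (abs_of_pos h).symm ▸ h⟩ hwT
      · intro hz
        rcases lt_trichotomy z 0 with h | h | h
        · refine Or.inr ⟨-z, ⟨?_, ?_⟩, by omega⟩
          · exact Finset.mem_image.2 ⟨z, hz, (abs_of_neg h)⟩
          · rintro ⟨hmem, -⟩
            exact hE.2.2 (-z) hmem (by simpa using hz)
        · exact absurd h (hpos z hz)
        · exact Or.inl ⟨hz, h⟩
    · -- right inverse
      rintro ⟨S, T⟩ hp
      rw [Finset.mem_sigma, Finset.mem_filter, Finset.mem_powerset,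
        Finset.mem_powerset] at hp
      obtain ⟨⟨hSA, _⟩, hTS⟩ := hp
      have hSpos : ∀ z ∈ S, 0 < z := fun z hz => hA z (hSA hz)
      have h1 : asupp (T ∪ (S \ T).image (fun z => -z)) = S := by
        ext w
        simp only [asupp, Finset.mem_image, Finset.mem_union, Finset.mem_sdiff]
        constructor
        · rintro ⟨z, hz | ⟨u, ⟨huS, huT⟩, rfl⟩, rfl⟩
          · rw [abs_of_pos (hSpos z (hTS hz))]; exact hTS hz
          · rwa [abs_neg, abs_of_pos (hSpos u huS)]
        · intro hw
          by_cases hwT : w ∈ T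
          · exact ⟨w, Or.inl hwT, abs_of_pos (hSpos w hw)⟩
          · exact ⟨-w, Or.inr ⟨w, ⟨hw, hwT⟩, rfl⟩, by
              rw [abs_neg, abs_of_pos (hSpos w hw)]⟩
      have h2 : (T ∪ (S \ T).image (fun z => -z)).filter (fun z => 0 < z) = T := by
        ext z
        simp only [Finset.mem_filter, Finset.mem_union, Finset.mem_image, Finset.mem_sdiff]
        constructor
        · rintro ⟨hz | ⟨u, ⟨huS, _⟩, rfl⟩, hzpos⟩
          · exact hz
          · have := hSpos u huS; omega
        · intro hz
          exact ⟨Or.inl hz, hSpos z (hTS hz)⟩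
      beta_reduce
      rw [h1, h2]
    · -- summand
      intro E hE
      rfl
  rw [key, Finset.sum_sigma]
  have step2 : ∀ S ∈ A.powerset.filter Finset.Nonempty,
      ∑ T ∈ S.powerset, f ((A \ S).card) = 2 ^ S.card * f (A.card - S.card) := by
    intro S hS
    rw [Finset.mem_filter, Finset.mem_powerset] at hS
    rw [Finset.sum_const, Finset.card_powerset, smul_eq_mul,
      Finset.card_sdiff_of_subset hS.1]
  rw [Finset.sum_congr rfl step2]
  rw [← Finset.sum_fiberwise_of_maps_to (g := Finset.card)
    (t := Finset.Icc 1 A.card) ?_ (fun S => 2 ^ S.card * f (A.card - S.card))]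
  · refine Finset.sum_congr rfl ?_
    intro k hk
    rw [Finset.mem_Icc] at hk
    have hfib : (A.powerset.filter Finset.Nonempty).filter (fun S => S.card = k)
        = Finset.powersetCard k A := by
      ext S
      simp only [Finset.mem_filter, Finset.mem_powerset, Finset.mem_powersetCard]
      constructor
      · rintro ⟨⟨h1, _⟩, h2⟩; exact ⟨h1, h2⟩
      · rintro ⟨h1, h2⟩
        refine ⟨⟨h1, ?_⟩, h2⟩
        rw [← Finset.card_pos, h2]; omega
    rw [hfib]
    have : ∀ S ∈ Finset.powersetCard k A,
        2 ^ S.card * f (A.card - S.card) = 2 ^ k * f (A.card - k) := by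
      intro S hS
      rw [(Finset.mem_powersetCard.1 hS).2]
    rw [Finset.sum_congr rfl this, Finset.sum_const, Finset.card_powersetCard,
      smul_eq_mul]
  · intro S hS
    rw [Finset.mem_filter, Finset.mem_powerset] at hS
    rw [Finset.mem_Icc]
    exact ⟨Finset.card_pos.2 hS.2, Finset.card_le_card hS.1⟩

lemma card_chainFin_zero (A : Finset ℤ) : (chainFin A 0).card = 1 := by
  rw [Finset.card_eq_one]
  refine ⟨fun i => i.elim0, ?_⟩
  ext c
  simp only [Finset.mem_singleton]
  constructor
  · intro _; funext i; exact i.elim0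
  · rintro rfl
    rw [mem_chainFin]
    exact ⟨fun k => k.elim0, fun k => k.elim0⟩

lemma card_chainFin (m : ℕ) : ∀ (A : Finset ℤ), (∀ a ∈ A, 0 < a) →
    (chainFin A m).card = Nrec m A.card := by
  induction m with
  | zero => intro A _; rw [card_chainFin_zero]; rfl
  | succ m ih =>
    intro A hA
    rw [card_chainFin_succ]
    have h1 : ∀ E ∈ BFin A,
        (chainFin (A \ asupp E) m).card = Nrec m ((A \ asupp E).card) :=
      fun E _ => ih _ (fun a ha => hA a (Finset.mem_sdiff.1 ha).1)
    rw [Finset.sum_congr rfl h1, sum_BFin A hA (Nrec m)]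
    show _ = Nrec (m+1) A.card
    simp [Nrec, mul_assoc]

lemma Nrec_eq_zero : ∀ m n, n < m → Nrec m n = 0 := by
  intro m
  induction m with
  | zero => intro n h; omega
  | succ m ih =>
    intro n h
    show (∑ k ∈ Finset.Icc 1 n, n.choose k * 2 ^ k * Nrec m (n - k)) = 0
    apply Finset.sum_eq_zero
    intro k hk
    rw [Finset.mem_Icc] at hk
    rw [ih (n - k) (by omega), mul_zero]

lemma dB_eq_Nrec (n m : ℕ) : dB n m = Nrec m n := by
  have hset : {c : Fin m → Finset ℤ |
      (∀ k l : Fin m, k < l → c l ⊂ c k) ∧ ∀ k, c k ∈ calB n}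
      = ↑(chainFin (Finset.Icc 1 (n:ℤ)) m) := by
    ext c
    simp only [Set.mem_setOf_eq, Finset.mem_coe, mem_chainFin]
    have hiff : ∀ B : Finset ℤ, B ∈ calB n ↔ okB (Finset.Icc 1 (n:ℤ)) B := by
      intro B
      constructor
      · rintro ⟨h1, h2, h3⟩
        refine ⟨h1, ?_, ?_⟩
        · intro z hz
          obtain ⟨hz0, hzn⟩ := h2 z hz
          rw [Finset.mem_Icc]
          exact ⟨Int.one_le_abs hz0, hzn⟩
        · intro z hz hnz
          rcases lt_trichotomy z 0 with h | h | h
          · refine h3 (-z) (by omega) ?_ ⟨hnz, by rwa [neg_neg]⟩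
            have := (h2 z hz).2
            rw [abs_of_neg h] at this; omega
          · exact (h2 z hz).1 h
          · refine h3 z (by omega) ?_ ⟨hz, hnz⟩
            have := (h2 z hz).2
            rw [abs_of_pos h] at this; omega
      · rintro ⟨h1, h2, h3⟩
        refine ⟨h1, ?_, ?_⟩
        · intro z hz
          have := Finset.mem_Icc.1 (h2 z hz)
          constructor
          · intro h0; rw [h0, abs_zero] at this; omega
          · exact this.2
        · intro i _ _ ⟨hi, hni⟩
          exact h3 i hi hni
    constructor
    · rintro ⟨ha, hb⟩; exact ⟨ha, fun k => (hiff _).1 (hb k)⟩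
    · rintro ⟨ha, hb⟩; exact ⟨ha, fun k => (hiff _).2 (hb k)⟩
  have hcard : (Finset.Icc (1:ℤ) (n:ℤ)).card = n := by
    rw [Int.card_Icc]; omega
  rw [dB, hset, Set.ncard_coe_finset,
    card_chainFin m _ (fun a ha => by
      have := Finset.mem_Icc.1 ha; omega), hcard]

lemma Nrec_succ (m n : ℕ) :
    Nrec (m+1) n = ∑ k ∈ Finset.Icc 1 n, n.choose k * 2 ^ k * Nrec m (n - k) := rfl

lemma pPoly_rec (n : ℕ) :
    (Polynomial.X - 1) * pPoly n
      = (Polynomial.X - 1) ^ (n+1)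
        + ∑ k ∈ Finset.Icc 1 n, ((n.choose k * 2 ^ k : ℕ) : Polynomial ℚ)
            * ((Polynomial.X - 1) ^ k * pPoly (n - k)) := by
  classical
  set u : Polynomial ℚ := Polynomial.X - 1 with hu
  have hL : u * pPoly n
      = ∑ m ∈ Finset.range (n+1), (Nrec m n : Polynomial ℚ) * u ^ (n+1-m) := by
    rw [pPoly, Finset.mul_sum]
    refine Finset.sum_congr rfl fun m hm => ?_
    rw [Finset.mem_range] at hm
    rw [dB_eq_Nrec]
    have h2 : n + 1 - m = (n - m) + 1 := by omega
    rw [h2, pow_succ]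
    ring
  have hR : ∀ k ∈ Finset.Icc 1 n,
      ((n.choose k * 2 ^ k : ℕ) : Polynomial ℚ) * (u ^ k * pPoly (n - k))
        = ∑ m ∈ Finset.range n,
            ((n.choose k * 2 ^ k * Nrec m (n - k) : ℕ) : Polynomial ℚ) * u ^ (n - m) := by
    intro k hk
    rw [Finset.mem_Icc] at hk
    rw [pPoly, Finset.mul_sum, Finset.mul_sum]
    have hsub : Finset.range (n - k + 1) ⊆ Finset.range n := by
      intro m hm; rw [Finset.mem_range] at *; omega
    have hzero : ∀ m ∈ Finset.range n, m ∉ Finset.range (n - k + 1) →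
        ((n.choose k * 2 ^ k * Nrec m (n - k) : ℕ) : Polynomial ℚ) * u ^ (n - m) = 0 := by
      intro m hm hm2
      rw [Finset.mem_range] at hm
      rw [Finset.mem_range] at hm2
      rw [Nrec_eq_zero m (n - k) (by omega)]
      push_cast
      ring
    rw [← Finset.sum_subset hsub hzero]
    refine Finset.sum_congr rfl fun m hm => ?_
    rw [Finset.mem_range] at hm
    rw [dB_eq_Nrec]
    have h3 : n - m = k + (n - k - m) := by omega
    rw [h3, pow_add]
    push_cast
    ring
  rw [hL, Finset.sum_range_succ', Finset.sum_congr rfl hR, add_comm]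
  have h0 : Nrec 0 n = 1 := rfl
  congr 1
  · rw [h0, Nat.cast_one, one_mul, Nat.sub_zero]
  · rw [Finset.sum_comm]
    refine Finset.sum_congr rfl fun m hm => ?_
    rw [Finset.mem_range] at hm
    rw [← Finset.sum_mul]
    have h4 : n + 1 - (m + 1) = n - m := by omega
    rw [h4]
    congr 1
    rw [Nrec_succ, Nat.cast_sum]


/-- In `(ℚ[t])⟦y⟧`: `(t - E_2(y)) · Σ_{n≥0} (p_n(t)/n!) y^n = (t - 1) · E_1(y)`,
i.e. `Σ_{n≥0} (p_n(t)/n!) y^n = e^{y(t-1)}(t-1)/(t - e^{2y(t-1)})`. -/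
theorem stmt7 :
    (PowerSeries.C (R := Polynomial ℚ) Polynomial.X - Ey 2) *
        PowerSeries.mk (fun n => (n.factorial : ℚ)⁻¹ • pPoly n)
      = PowerSeries.C (R := Polynomial ℚ) (Polynomial.X - 1) * Ey 1 := by
  apply PowerSeries.ext
  intro n
  rw [sub_mul, map_sub, PowerSeries.coeff_C_mul, PowerSeries.coeff_C_mul,
    PowerSeries.coeff_mk, PowerSeries.coeff_mul]
  simp only [Ey, PowerSeries.coeff_mk]
  rw [Finset.Nat.sum_antidiagonal_eq_sum_range_succ_mk, Finset.sum_range_succ']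
  have hsum : (∑ i ∈ Finset.range n,
      ((((i+1).factorial : ℚ))⁻¹ • (Polynomial.C (2:ℚ) * (Polynomial.X - 1)) ^ (i+1)) *
        ((((n - (i+1)).factorial : ℚ))⁻¹ • pPoly (n - (i+1))))
      = Polynomial.C ((n.factorial : ℚ))⁻¹ *
        ∑ k ∈ Finset.Icc 1 n, ((n.choose k * 2 ^ k : ℕ) : Polynomial ℚ)
            * ((Polynomial.X - 1) ^ k * pPoly (n - k)) := by
    rw [Finset.mul_sum, ← Finset.Ico_add_one_right_eq_Icc, Finset.sum_Ico_eq_sum_range]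
    have hn1 : n + 1 - 1 = n := rfl
    rw [hn1]
    refine Finset.sum_congr rfl fun i hi => ?_
    rw [Finset.mem_range] at hi
    have h1i : 1 + i = i + 1 := by omega
    rw [h1i]
    rw [mul_pow, ← map_pow, ← Polynomial.smul_eq_C_mul,
      ← Polynomial.C_eq_natCast, ← Polynomial.smul_eq_C_mul, ← Polynomial.smul_eq_C_mul]
    simp only [smul_smul, smul_mul_assoc, mul_smul_comm]
    congr 1
    have h1 : ((i+1).factorial : ℚ) ≠ 0 := Nat.cast_ne_zero.2 (Nat.factorial_ne_zero _)
    have h2 : (((n-(i+1)).factorial : ℚ)) ≠ 0 := Nat.cast_ne_zero.2 (Nat.factorial_ne_zero _)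
    have h3 : ((n.factorial : ℚ)) ≠ 0 := Nat.cast_ne_zero.2 (Nat.factorial_ne_zero _)
    rw [Nat.cast_mul, Nat.cast_choose ℚ (by omega : i+1 ≤ n)]
    push_cast
    field_simp
  rw [hsum]
  have star := pPoly_rec n
  simp only [pow_zero, Nat.factorial_zero, Nat.cast_one, inv_one, one_smul, Nat.sub_zero,
    one_mul, Polynomial.C_1]
  rw [Polynomial.smul_eq_C_mul, Polynomial.smul_eq_C_mul]
  linear_combination Polynomial.C ((n.factorial : ℚ))⁻¹ * star
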